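/- Let Λ be a skew-symmetric n×n integer matrix invertible over Q, and let T be the associated quantum torus over Z[q^{±1/2}]. Suppose g : T → T is a Z[q^{±1/2}]-linear map such that [g(x), y] = [x, g(y)] for all x, y ∈ T, and g(X^e) = k_e X^e for some scalar k_e ∈ Z[q^{±1/2}] for every e ∈ Z^n. Then there is a single scalar k₀ such that k_e = k₀ for all e ≠ 0. -/

import Mathlib

open Matrix

/-- Let `T` be the quantum torus of an invertible skew-symmetric integer
matrix `Λ`. If `g` is a `ℤ[q^{±1/2}]`-linear map with `[g x, y] = [x, g y]` and
`g X^e = k_e • X^e` for all `e`, then all `k_e` with `e ≠ 0` coincide. -/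
theorem stmt15 {n : ℕ} (Λ : Matrix (Fin n) (Fin n) ℤ) (hΛ : Λᵀ = -Λ)
    (hinv : IsUnit ((Λ.map (Int.cast : ℤ → ℚ)).det))
    (T : Type*) [Ring T] [Algebra (LaurentPolynomial ℤ) T]
    (b : Module.Basis (Fin n → ℤ) (LaurentPolynomial ℤ) T)
    (hmul : ∀ e f, b e * b f =
      ((LaurentPolynomial.T (e ⬝ᵥ Λ.mulVec f) : LaurentPolynomial ℤ)) • b (e + f))
    (g : T →ₗ[LaurentPolynomial ℤ] T)
    (hsym : ∀ x y, g x * y - y * g x = x * g y - g y * x)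
    (k : (Fin n → ℤ) → LaurentPolynomial ℤ)
    (hdiag : ∀ e, g (b e) = k e • b e) :
    ∃ k₀ : LaurentPolynomial ℤ, ∀ e : Fin n → ℤ, e ≠ 0 → k e = k₀ := by
  -- skew symmetry of the pairing
  have hskew : ∀ e f : Fin n → ℤ, f ⬝ᵥ Λ *ᵥ e = -(e ⬝ᵥ Λ *ᵥ f) := by
    intro e f
    rw [dotProduct_mulVec, ← mulVec_transpose, hΛ, neg_mulVec, neg_dotProduct,
      dotProduct_comm]
  -- key step: k e = k f whenever the pairing is nonzero
  have key : ∀ e f : Fin n → ℤ, e ⬝ᵥ Λ *ᵥ f ≠ 0 → k e = k f := by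
    intro e f ha
    set a : ℤ := e ⬝ᵥ Λ *ᵥ f with hadef
    have h := hsym (b e) (b f)
    rw [hdiag e, hdiag f, smul_mul_assoc, mul_smul_comm, smul_mul_assoc, mul_smul_comm,
      hmul e f, hmul f e, hskew e f, add_comm f e, smul_smul, smul_smul, smul_smul,
      smul_smul, ← sub_smul, ← sub_smul] at h
    have h2 : ((k e * LaurentPolynomial.T a - k e * LaurentPolynomial.T (-a)) -
        (k f * LaurentPolynomial.T a - k f * LaurentPolynomial.T (-a))) = 0 := by
      have := congrArg (fun x => b.repr x (e + f)) (sub_eq_zero.mpr h)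
      simpa [sub_smul] using this
    have h3 : (k e - k f) * (LaurentPolynomial.T a - LaurentPolynomial.T (-a)) = 0 := by
      ring_nf
      ring_nf at h2
      linear_combination h2
    have hT : (LaurentPolynomial.T a - LaurentPolynomial.T (-a) : LaurentPolynomial ℤ) ≠ 0 := by
      intro hc
      have h4 : (LaurentPolynomial.T a - LaurentPolynomial.T (-a) : LaurentPolynomial ℤ).coeff a = 0 := by
        rw [hc]; rfl
      rw [AddMonoidAlgebra.coeff_sub, Finsupp.sub_apply] at h4
      have hne : -a ≠ a := by omega
      simp [LaurentPolynomial.T_apply, hne] at h4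
    rcases mul_eq_zero.mp h3 with h | h
    · exact sub_eq_zero.mp h
    · exact absurd h hT
  -- nondegeneracy: any nonzero e pairs nontrivially with some f
  have nondeg : ∀ e : Fin n → ℤ, e ≠ 0 → ∃ f : Fin n → ℤ, e ⬝ᵥ Λ *ᵥ f ≠ 0 := by
    intro e he
    have hrow : e ᵥ* Λ ≠ 0 := by
      intro hc
      apply he
      have hQ : ((Int.cast : ℤ → ℚ) ∘ e) ᵥ* (Λ.map (Int.cast : ℤ → ℚ)) = 0 := by
        funext i
        have := (Int.castRingHom ℚ).map_vecMul Λ e i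
        rw [hc] at this
        simpa using this.symm
      have : ((Int.cast : ℤ → ℚ) ∘ e) = 0 := by
        have h1 := congrArg (fun v => v ᵥ* (Λ.map (Int.cast : ℤ → ℚ))⁻¹) hQ
        simpa [vecMul_vecMul, Matrix.mul_nonsing_inv _ hinv] using h1
      funext i
      have := congrFun this i
      simpa using this
    obtain ⟨i, hi⟩ := Function.ne_iff.mp hrow
    refine ⟨Pi.single i 1, ?_⟩
    rw [dotProduct_mulVec]
    simpa [dotProduct_single] using hi
  refine ⟨k (fun _ => 1), ?_⟩
  intro e he
  rcases Nat.eq_zero_or_pos n with hn | hn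
  · exact absurd (funext fun i => absurd i.2 (by omega)) he
  have hone : (fun _ => (1 : ℤ) : Fin n → ℤ) ≠ 0 := by
    intro hc
    have := congrFun hc ⟨0, hn⟩
    simp at this
  obtain ⟨u, hu⟩ := nondeg e he
  obtain ⟨v, hv⟩ := nondeg _ hone
  by_cases h1 : e ⬝ᵥ Λ *ᵥ v ≠ 0
  · exact (key e v h1).trans (key _ v hv).symm
  · by_cases h2 : (fun _ => (1:ℤ)) ⬝ᵥ Λ *ᵥ u ≠ 0
    · exact (key e u hu).trans (key _ u h2).symm
    · push_neg at h1 h2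
      have hw1 : e ⬝ᵥ Λ *ᵥ (u + v) ≠ 0 := by
        rw [mulVec_add, dotProduct_add, h1, add_zero]; exact hu
      have hw2 : (fun _ => (1:ℤ)) ⬝ᵥ Λ *ᵥ (u + v) ≠ 0 := by
        rw [mulVec_add, dotProduct_add, h2, zero_add]; exact hv
      exact (key e _ hw1).trans (key _ _ hw2).symm
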